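/- The Varshamov–Tenengolts code VT₀(ℓ) = { x ∈ {0,1}^ℓ : Σ_{i=1}^{ℓ} i·x_i ≡ 0 (mod ℓ+1) } can correct a single deletion: for any two distinct codewords x, y ∈ VT₀(ℓ), no binary string of length ℓ - 1 is a subsequence of both x and y. -/

import Mathlib

/-- The VT syndrome `Σ_{i=1}^{ℓ} i·x_i` (1-based indices). -/
def vtSyndrome {ℓ : ℕ} (x : Fin ℓ → Bool) : ℕ :=
  ∑ i : Fin ℓ, (i.val + 1) * (x i).toNat

namespace VTAux

/-- The weight (number of ones) of a binary list. -/
def wt (l : List Bool) : ℕ := (l.map Bool.toNat).sum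

/-- Syndrome of a list, recursively. -/
def syn : List Bool → ℕ
  | [] => 0
  | a :: l => a.toNat + wt l + syn l

lemma wt_cons (a : Bool) (l : List Bool) : wt (a :: l) = a.toNat + wt l := by
  simp [wt]

lemma wt_append (l₁ l₂ : List Bool) : wt (l₁ ++ l₂) = wt l₁ + wt l₂ := by
  simp [wt]

lemma wt_le_length (l : List Bool) : wt l ≤ l.length := by
  induction l with
  | nil => simp [wt]
  | cons a l ih =>
    rw [wt_cons]
    have : a.toNat ≤ 1 := by cases a <;> simp
    simp only [List.length_cons]; omega

lemma wt_eq_zero {l : List Bool} (h : wt l = 0) : l = List.replicate l.length false := by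
  induction l with
  | nil => simp
  | cons a l ih =>
    rw [wt_cons] at h
    have ha : a.toNat = 0 := by omega
    have : a = false := by cases a <;> simp_all
    subst this
    simp only [List.length_cons, List.replicate_succ, List.cons.injEq, true_and]
    exact ih (by omega)

lemma wt_eq_length {l : List Bool} (h : wt l = l.length) :
    l = List.replicate l.length true := by
  induction l with
  | nil => simp
  | cons a l ih =>
    rw [wt_cons] at h
    have hle := wt_le_length l
    have hab : a.toNat ≤ 1 := by cases a <;> simp
    have ha : a.toNat = 1 := by simp only [List.length_cons] at h; omega
    have : a = true := by cases a <;> simp_all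
    subst this
    simp only [List.length_cons, List.replicate_succ, List.cons.injEq, true_and]
    exact ih (by simp only [List.length_cons] at h; omega)

lemma wt_perm {l₁ l₂ : List Bool} (h : l₁.Perm l₂) : wt l₁ = wt l₂ :=
  (h.map Bool.toNat).sum_eq

lemma wt_insertIdx (l : List Bool) (p : ℕ) (b : Bool) (hp : p ≤ l.length) :
    wt (l.insertIdx p b) = b.toNat + wt l := by
  rw [wt_perm (List.perm_insertIdx b l hp), wt_cons]

lemma syn_insertIdx : ∀ (p : ℕ) (l : List Bool) (b : Bool), p ≤ l.length →
    syn (l.insertIdx p b) = syn l + (p + 1) * b.toNat + wt (l.drop p)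
  | 0, l, b, _ => by
    simp only [List.insertIdx_zero, syn, List.drop_zero, one_mul]
    omega
  | (p+1), [], b, hp => by simp at hp
  | (p+1), a :: l, b, hp => by
    rw [List.insertIdx_succ_cons]
    have hp' : p ≤ l.length := by simpa using hp
    simp only [syn, wt_insertIdx l p b hp', syn_insertIdx p l b hp', List.drop_succ_cons]
    have : (p + 1 + 1) * b.toNat = (p + 1) * b.toNat + b.toNat := by ring
    omega

lemma vtSyndrome_eq_syn : ∀ {ℓ : ℕ} (x : Fin ℓ → Bool),
    vtSyndrome x = syn (List.ofFn x)
  | 0, x => by simp [vtSyndrome, syn]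
  | (n+1), x => by
    rw [List.ofFn_succ]
    simp only [syn]
    rw [← vtSyndrome_eq_syn (fun i => x i.succ)]
    have hwt : wt (List.ofFn fun i : Fin n => x i.succ)
        = ∑ i : Fin n, (x i.succ).toNat := by
      rw [wt, List.map_ofFn, List.sum_ofFn]; rfl
    rw [hwt]
    unfold vtSyndrome
    rw [Fin.sum_univ_succ]
    have : ∀ i : Fin n, ((i.succ : Fin (n+1)).val + 1) * (x i.succ).toNat
        = (i.val + 1) * (x i.succ).toNat + (x i.succ).toNat := by
      intro i; simp [Fin.val_succ]; ring
    simp only [this, Finset.sum_add_distrib, Fin.val_zero]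
    omega

lemma exists_insertIdx {z w : List Bool} (h : z.Sublist w)
    (hl : w.length = z.length + 1) : ∃ p b, p ≤ z.length ∧ w = z.insertIdx p b := by
  induction h with
  | slnil => simp at hl
  | @cons z w a h ih =>
    have hlen : z.length = w.length := by simpa using hl.symm
    have hz : z = w := h.eq_of_length hlen
    exact ⟨0, a, Nat.zero_le _, by simp [hz, List.insertIdx]⟩
  | @cons_cons z w a h ih =>
    obtain ⟨p, b, hp, rfl⟩ := ih (by simpa using hl)
    exact ⟨p + 1, b, by simpa using Nat.succ_le_succ hp,
      List.insertIdx_succ_cons.symm⟩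

lemma insertIdx_take_drop : ∀ (p : ℕ) (l : List Bool) (a : Bool), p ≤ l.length →
    l.insertIdx p a = l.take p ++ a :: l.drop p
  | 0, l, a, _ => by simp [List.insertIdx]
  | (p+1), [], a, hp => by simp at hp
  | (p+1), x :: l, a, hp => by
    rw [List.insertIdx_succ_cons, insertIdx_take_drop p l a (by simpa using hp)]
    simp

lemma insertIdx_eq_of_replicate (z : List Bool) (p q : ℕ) (b : Bool)
    (hpq : p ≤ q) (hq : q ≤ z.length)
    (hseg : (z.drop p).take (q - p) = List.replicate (q - p) b) :
    z.insertIdx p b = z.insertIdx q b := by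
  rw [insertIdx_take_drop p z b (le_trans hpq hq), insertIdx_take_drop q z b hq]
  have hq' : q = p + (q - p) := by omega
  rw [hq', List.take_add, ← List.drop_drop]
  have hdrop : z.drop p = (z.drop p).take (q - p) ++ (z.drop p).drop (q - p) :=
    (List.take_append_drop _ _).symm
  conv_lhs => rw [hdrop]
  rw [hseg]
  have : b :: List.replicate (q - p) b = List.replicate (q - p) b ++ [b] := by
    rw [← List.replicate_succ, List.replicate_succ']
  rw [← List.cons_append, this]; simp [List.append_assoc]

lemma seg_length (z : List Bool) (p q : ℕ) (hpq : p ≤ q) (hq : q ≤ z.length) :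
    ((z.drop p).take (q - p)).length = q - p := by
  simp [List.length_take, List.length_drop]; omega

lemma key (z : List Bool) (p q : ℕ) (b c : Bool) (hpq : p ≤ q) (hp : p ≤ z.length)
    (hq : q ≤ z.length)
    (hdvd : ((z.length + 2 : ℕ) : ℤ) ∣ ((syn (z.insertIdx p b) : ℤ) - syn (z.insertIdx q c))) :
    z.insertIdx p b = z.insertIdx q c := by
  set L := z.length with hL
  set seg := (z.drop p).take (q - p) with hseg
  have hsl : seg.length = q - p := seg_length z p q hpq hq
  set m := wt seg with hm
  have hmle : m ≤ q - p := hsl ▸ wt_le_length seg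
  have hdropsplit : z.drop p = seg ++ z.drop q := by
    rw [hseg]
    have : (z.drop p).drop (q - p) = z.drop q := by
      rw [List.drop_drop]; congr 1; omega
    rw [← this, List.take_append_drop]
  have hwts : wt (z.drop p) = m + wt (z.drop q) := by
    rw [hdropsplit, wt_append]
  rw [syn_insertIdx p z b hp, syn_insertIdx q z c hq] at hdvd
  have hdvd' : ((L + 2 : ℕ) : ℤ) ∣
      ((p + 1 : ℤ) * b.toNat - (q + 1 : ℤ) * c.toNat + m) := by
    convert hdvd using 1
    push_cast [hwts]
    ring
  cases b <;> cases c <;>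
    simp only [Bool.toNat_true, Bool.toNat_false, Nat.cast_zero, Nat.cast_one,
      mul_one, mul_zero, zero_sub, sub_zero, zero_add, add_zero] at hdvd'
  · -- b = false, c = false : value = m
    have hm0 : (m : ℤ) = 0 := by
      apply Int.eq_zero_of_abs_lt_dvd hdvd'
      rw [abs_of_nonneg (by positivity)]
      push_cast; omega
    have hws : wt seg = 0 := by rw [← hm]; exact_mod_cast hm0
    have hrep : seg = List.replicate (q - p) false := by
      rw [← hsl]; exact wt_eq_zero hws
    exact insertIdx_eq_of_replicate z p q false hpq hq hrep
  · -- b = false, c = true : value = m - (q+1) < 0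
    exfalso
    have h0 : (-(q + 1 : ℤ) + m) = 0 := by
      apply Int.eq_zero_of_abs_lt_dvd hdvd'
      rw [abs_of_nonpos (by push_cast; omega)]
      push_cast; omega
    push_cast at h0; omega
  · -- b = true, c = false : value = (p+1) + m > 0
    exfalso
    have h0 : ((p + 1 : ℤ) + m) = 0 := by
      apply Int.eq_zero_of_abs_lt_dvd hdvd'
      rw [abs_of_nonneg (by positivity)]
      push_cast; omega
    push_cast at h0; omega
  · -- b = true, c = true : value = (p+1) - (q+1) + m = m - (q - p)
    have h0 : ((p + 1 : ℤ) - (q + 1) + m) = 0 := by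
      apply Int.eq_zero_of_abs_lt_dvd hdvd'
      rw [abs_lt]; push_cast; omega
    have hmq : m = q - p := by push_cast at h0; omega
    have hrep : seg = List.replicate (q - p) true := by
      have := wt_eq_length (l := seg) (by rw [hsl, ← hm, hmq])
      rwa [hsl] at this
    exact insertIdx_eq_of_replicate z p q true hpq hq hrep

end VTAux

/-- The Varshamov–Tenengolts code
`VT₀(ℓ) = {x : Σ i·x_i ≡ 0 (mod ℓ+1)}` corrects a single deletion: distinct
codewords share no common subsequence of length `ℓ - 1`. -/
theorem vt_code_corrects_single_deletion (ℓ : ℕ) (x y : Fin ℓ → Bool)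
    (hx : vtSyndrome x % (ℓ + 1) = 0) (hy : vtSyndrome y % (ℓ + 1) = 0)
    (hxy : x ≠ y) :
    ¬ ∃ z : List Bool, z.length = ℓ - 1 ∧
      z.Sublist (List.ofFn x) ∧ z.Sublist (List.ofFn y) := by
  rintro ⟨z, hz, hzx, hzy⟩
  rcases Nat.eq_zero_or_pos ℓ with h0 | hpos
  · subst h0
    exact hxy (funext fun i => i.elim0)
  obtain ⟨n, rfl⟩ : ∃ n, ℓ = n + 1 := ⟨ℓ - 1, by omega⟩
  have hzl : z.length = n := by simpa using hz
  have hlenx : (List.ofFn x).length = z.length + 1 := by simp [hzl]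
  have hleny : (List.ofFn y).length = z.length + 1 := by simp [hzl]
  obtain ⟨p, b, hp, hxe⟩ := VTAux.exists_insertIdx hzx hlenx
  obtain ⟨q, c, hq, hye⟩ := VTAux.exists_insertIdx hzy hleny
  have hdx : ((n + 2 : ℕ) : ℤ) ∣ (VTAux.syn (List.ofFn x) : ℤ) := by
    rw [← VTAux.vtSyndrome_eq_syn]
    exact_mod_cast Int.natCast_dvd_natCast.mpr (Nat.dvd_of_mod_eq_zero hx)
  have hdy : ((n + 2 : ℕ) : ℤ) ∣ (VTAux.syn (List.ofFn y) : ℤ) := by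
    rw [← VTAux.vtSyndrome_eq_syn]
    exact_mod_cast Int.natCast_dvd_natCast.mpr (Nat.dvd_of_mod_eq_zero hy)
  have hmod : ((z.length + 2 : ℕ) : ℤ) ∣
      ((VTAux.syn (z.insertIdx p b) : ℤ) - VTAux.syn (z.insertIdx q c)) := by
    rw [← hxe, ← hye, hzl]
    exact dvd_sub hdx hdy
  have heq : z.insertIdx p b = z.insertIdx q c := by
    rcases le_total p q with hpq | hqp
    · exact VTAux.key z p q b c hpq hp hq hmod
    · exact (VTAux.key z q p c b hqp hq hp (by
        have := (dvd_neg.mpr hmod); simpa using this)).symm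
  have : List.ofFn x = List.ofFn y := by rw [hxe, hye, heq]
  exact hxy (List.ofFn_injective this)
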